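/- If a, b ∈ ℂ satisfy |a|² + |b|² = 1, then ‖(⟨+| ⊗ I₂ ⊗ I₂) · qs₃‖² = 1/2 and ‖(⟨−| ⊗ I₂ ⊗ I₂) · qs₃‖² = 1/2, where qs₃ = (1/2)(a,a,a,−a,b,b,−b,b)ᵀ. That is, both outcomes of Alice's first measurement M⁰₁ in the Quantum Teleportation Protocol occur with probability λ = 1/2; in particular both transitions are admissible. -/

import Mathlib

open Matrix Kronecker

noncomputable section

/-- Kronecker product reindexed to `Fin`-indexed matrices, with the first factor
most significant (lexicographic ordering of bitstrings). -/
def kron {m n p q : ℕ} (A : Matrix (Fin m) (Fin n) ℂ) (B : Matrix (Fin p) (Fin q) ℂ) :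
    Matrix (Fin (m * p)) (Fin (n * q)) ℂ :=
  Matrix.reindex finProdFinEquiv finProdFinEquiv (A ⊗ₖ B)

/-- |+⟩ = (1/√2)(1,1)ᵀ -/
def ketPlus : Matrix (Fin 2) (Fin 1) ℂ := (Real.sqrt 2 : ℂ)⁻¹ • !![1; 1]

/-- |−⟩ = (1/√2)(1,−1)ᵀ -/
def ketMinus : Matrix (Fin 2) (Fin 1) ℂ := (Real.sqrt 2 : ℂ)⁻¹ • !![1; -1]

/-- ⟨+| : conjugate transpose of |+⟩ -/
def braPlus : Matrix (Fin 1) (Fin 2) ℂ := ketPlusᴴ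

/-- ⟨−| : conjugate transpose of |−⟩ -/
def braMinus : Matrix (Fin 1) (Fin 2) ℂ := ketMinusᴴ

/-- ⟨x_s| with |x₀⟩ = |+⟩, |x₁⟩ = |−⟩ -/
def bra : Fin 2 → Matrix (Fin 1) (Fin 2) ℂ := ![braPlus, braMinus]

/-- identity on one qubit -/
def I2 : Matrix (Fin 2) (Fin 2) ℂ := 1

/-- controlled-Z operator CZ = diag(1,1,1,−1) -/
def CZ : Matrix (Fin 4) (Fin 4) ℂ := !![1,0,0,0; 0,1,0,0; 0,0,1,0; 0,0,0,-1]

/-- Pauli X -/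
def X : Matrix (Fin 2) (Fin 2) ℂ := !![0,1; 1,0]

/-- Pauli Z -/
def Z : Matrix (Fin 2) (Fin 2) ℂ := !![1,0; 0,-1]

/-- one-qubit state (a,b)ᵀ -/
def ket (a b : ℂ) : Matrix (Fin 2) (Fin 1) ℂ := !![a; b]

/-- the entangled resource state χ = (1/2)(1,1,1,−1)ᵀ -/
def chi : Matrix (Fin 4) (Fin 1) ℂ := (1/2 : ℂ) • !![1; 1; 1; -1]

/-- qs₃ = (1/2)(a,a,a,−a,b,b,−b,b)ᵀ -/
def qs3 (a b : ℂ) : Matrix (Fin 8) (Fin 1) ℂ := (1/2 : ℂ) • !![a; a; a; -a; b; b; -b; b]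

/-- qs₆ = (1/2)(a+b,a+b,a−b,−a+b)ᵀ -/
def qs6 (a b : ℂ) : Matrix (Fin 4) (Fin 1) ℂ := (1/2 : ℂ) • !![a+b; a+b; a-b; -a+b]

/-- qs₇ = (1/2)(a−b,a−b,a+b,−a−b)ᵀ -/
def qs7 (a b : ℂ) : Matrix (Fin 4) (Fin 1) ℂ := (1/2 : ℂ) • !![a-b; a-b; a+b; -a-b]

lemma prodPlus (a b : ℂ) : ((kron (kron braPlus I2) I2) * qs3 a b) =
    ((Real.sqrt 2 : ℂ)⁻¹ * (1/2)) • !![a+b; a+b; a-b; -(a-b)] := by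
  ext i j
  fin_cases i <;> fin_cases j <;>
    simp [kron, braPlus, ketPlus, I2, qs3, Matrix.mul_apply, Fin.sum_univ_succ,
      finProdFinEquiv, Matrix.one_apply, Fin.divNat, Fin.modNat] <;>
    norm_num [show ((3:Fin 4):ℕ) = 3 from rfl] <;> ring

lemma prodMinus (a b : ℂ) : ((kron (kron braMinus I2) I2) * qs3 a b) =
    ((Real.sqrt 2 : ℂ)⁻¹ * (1/2)) • !![a-b; a-b; a+b; -(a+b)] := by
  ext i j
  fin_cases i <;> fin_cases j <;>
    simp [kron, braMinus, ketMinus, I2, qs3, Matrix.mul_apply, Fin.sum_univ_succ,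
      finProdFinEquiv, Matrix.one_apply, Fin.divNat, Fin.modNat] <;>
    norm_num [show ((3:Fin 4):ℕ) = 3 from rfl] <;> ring

lemma parallel (c d : ℂ) :
    ‖c + d‖ ^ 2 + ‖c - d‖ ^ 2
      = 2 * (‖c‖ ^ 2 + ‖d‖ ^ 2) := by
  rw [norm_add_sq_real, norm_sub_sq_real]; ring

lemma absK : ‖(Real.sqrt 2 : ℂ)⁻¹ * (1/2)‖ ^ 2 = 1 / 8 := by
  rw [norm_mul, norm_inv]
  simp [Complex.norm_real, abs_of_nonneg (Real.sqrt_nonneg 2)]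
  rw [mul_pow, inv_pow, Real.sq_sqrt (by norm_num : (2:ℝ) ≥ 0)]
  norm_num

lemma sumFour (c d : ℂ)
    (hc : ‖c‖ ^ 2 + ‖d‖ ^ 2 = 2) :
    (∑ i : Fin 4, ‖
      ((((Real.sqrt 2 : ℂ)⁻¹ * (1/2)) • !![c; c; d; -d]) i 0)‖ ^ 2) = 1 / 2 := by
  have e : ∀ x : ℂ, ‖(Real.sqrt 2 : ℂ)⁻¹ * (1/2) * x‖ ^ 2
      = (1/8) * ‖x‖ ^ 2 := by
    intro x; rw [norm_mul, mul_pow, absK]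
  simp only [Fin.sum_univ_four, Matrix.smul_apply, smul_eq_mul, e, norm_neg,
    Matrix.cons_val', Matrix.cons_val_zero, Matrix.cons_val_one, Matrix.head_cons,
    Matrix.cons_val_two, Matrix.tail_cons, Matrix.cons_val_three,
    Matrix.empty_val', Matrix.cons_val_fin_one, Matrix.head_fin_const]
  have h0 : (!![c;c;d;-d] : Matrix (Fin 4) (Fin 1) ℂ) 0 0 = c := rfl
  have h1 : (!![c;c;d;-d] : Matrix (Fin 4) (Fin 1) ℂ) 1 0 = c := rfl
  have h2 : (!![c;c;d;-d] : Matrix (Fin 4) (Fin 1) ℂ) 2 0 = d := rfl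
  have h3 : (!![c;c;d;-d] : Matrix (Fin 4) (Fin 1) ℂ) 3 0 = -d := rfl
  rw [h0, h1, h2, h3, norm_neg]
  linarith [hc]

theorem stmt5 (a b : ℂ) (h : ‖a‖ ^ 2 + ‖b‖ ^ 2 = 1) :
    (∑ i, ‖
        (((kron (kron braPlus I2) I2 : Matrix (Fin 4) (Fin 8) ℂ) * qs3 a b) i 0)‖ ^ 2 = 1 / 2) ∧
    (∑ i, ‖
        (((kron (kron braMinus I2) I2 : Matrix (Fin 4) (Fin 8) ℂ) * qs3 a b) i 0)‖ ^ 2 = 1 / 2) := by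
  have hpar := parallel a b
  constructor
  · rw [prodPlus]
    exact sumFour (a+b) (a-b) (by linarith)
  · rw [prodMinus]
    exact sumFour (a-b) (a+b) (by linarith)
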